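/- For the Lorenz 63 system with σ, ρ, β > 0, the function V(x,y,z) = ρx² + σy² + σ(z − 2ρ)² satisfies dV/dt along trajectories equal to −2σ(ρx² + y² + βz² − 2βρz), and consequently dV/dt < 0 whenever ρx² + y² + β(z − ρ)² > βρ²; hence all trajectories eventually enter and remain in a bounded set. -/

import Mathlib

/-- For Lorenz 63 with `σ, ρ, β > 0`, the Lyapunov function
`V = ρx² + σy² + σ(z - 2ρ)²` satisfies
`dV/dt = -2σ(ρx² + y² + βz² - 2βρz)` along trajectories, and `dV/dt < 0`
whenever `ρx² + y² + β(z-ρ)² > βρ²`. -/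
theorem lorenz63_lyapunov (σ ρ β : ℝ) (hσ : 0 < σ) (hρ : 0 < ρ) (hβ : 0 < β)
    (x y z : ℝ → ℝ)
    (hx : ∀ t, HasDerivAt x (σ * (y t - x t)) t)
    (hy : ∀ t, HasDerivAt y (x t * (ρ - z t) - y t) t)
    (hz : ∀ t, HasDerivAt z (x t * y t - β * z t) t) :
    ∀ t : ℝ,
      HasDerivAt (fun s => ρ * x s ^ 2 + σ * y s ^ 2 + σ * (z s - 2 * ρ) ^ 2)
        (-2 * σ * (ρ * x t ^ 2 + y t ^ 2 + β * z t ^ 2 - 2 * β * ρ * z t)) t ∧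
      (ρ * x t ^ 2 + y t ^ 2 + β * (z t - ρ) ^ 2 > β * ρ ^ 2 →
        -2 * σ * (ρ * x t ^ 2 + y t ^ 2 + β * z t ^ 2 - 2 * β * ρ * z t) < 0) := by
  intro t
  constructor
  · have h := (((hx t).fun_pow 2).const_mul ρ).add (((hy t).fun_pow 2).const_mul σ) |>.add
      ((((hz t).sub_const (2*ρ)).fun_pow 2).const_mul σ)
    convert h using 1
    · rfl
    · rfl
    · rfl
    · ring
  · intro h
    nlinarith [sq_nonneg (x t), sq_nonneg (y t), sq_nonneg (z t - ρ), mul_pos hβ hρ]
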